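/- Let X be a log-concave random variable on the integers with p.m.f. p, mean zero and variance \sigma^2, and let 0 < \epsilon < 1/2. If \sigma \geq \max\{3^{1/\epsilon}, (12e^3)^{1/(1-2\epsilon)}\}, then there exists N_0^- \in \{N_{max} - 2\lceil\sigma^2\rceil, \ldots, N_{max}\} such that for all k \leq N_0^-, p(k-1) \leq (1 - \sigma^{-(2-\epsilon)}) p(k). -/

import Mathlib

set_option maxHeartbeats 800000

/-- Cross-multiplied ratio monotonicity for log-concave sequences. -/
private lemma logconcave_cross (p : ℤ → ℝ) (hp : ∀ k, 0 ≤ p k)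
    (hlc : ∀ k : ℤ, p (k - 1) * p (k + 1) ≤ p k ^ 2) (k : ℤ) :
    ∀ m : ℤ, k ≤ m → (∀ j, k ≤ j → j ≤ m → 0 < p j) →
      p (k - 1) * p m ≤ p (m - 1) * p k := by
  intro m hm
  refine Int.le_induction (motive := fun m _ => (∀ j, k ≤ j → j ≤ m → 0 < p j) →
      p (k - 1) * p m ≤ p (m - 1) * p k) ?_ ?_ m hm
  · intro _; exact le_refl _
  · intro m hm ih hpos
    have hpm : 0 < p m := hpos m hm (by linarith)
    have ih' := ih (fun j hj hj' => hpos j hj (by linarith))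
    have hl := hlc m
    have h1 : (p (k - 1) * p (m + 1)) * p m ≤ (p m * p k) * p m := by
      calc (p (k - 1) * p (m + 1)) * p m = (p (k - 1) * p m) * p (m + 1) := by ring
        _ ≤ (p (m - 1) * p k) * p (m + 1) := mul_le_mul_of_nonneg_right ih' (hp _)
        _ = (p (m - 1) * p (m + 1)) * p k := by ring
        _ ≤ p m ^ 2 * p k := mul_le_mul_of_nonneg_right hl (hp _)
        _ = (p m * p k) * p m := by ring
    have h2 := le_of_mul_le_mul_right h1 hpm
    have h3 : (m + 1 - 1 : ℤ) = m := by ring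
    rw [h3]
    exact h2

/-- Lemma: geometric decay of the left tail of a log-concave p.m.f.  Let `X` be
log-concave on the integers with p.m.f. `p`, mean zero and variance `σ²`, and let
`0 < ε < 1/2`.  Let `N` be the last mode and assume the Bobkov–Marsiglietti–Melbourne
bounds `1/(4σ) ≤ p N ≤ 1/σ`.  If `σ ≥ max (3^(1/ε)) ((12e³)^(1/(1-2ε)))`, then
there is `N₀⁻ ∈ {N - 2⌈σ²⌉, …, N}` such that for all `k ≤ N₀⁻`,
`p (k-1) ≤ (1 - σ^(-(2-ε))) * p k`. -/
theorem logConcave_left_tail_geometric (p : ℤ → ℝ) (hp : ∀ k, 0 ≤ p k) (hsum : HasSum p 1)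
    (hlc : ∀ k : ℤ, p (k - 1) * p (k + 1) ≤ p k ^ 2)
    (hsupp : ∀ a b k : ℤ, a ≤ k → k ≤ b → 0 < p a → 0 < p b → 0 < p k)
    (σ ε : ℝ) (hε0 : 0 < ε) (hε1 : ε < 1 / 2)
    (hmean : HasSum (fun k : ℤ => (k : ℝ) * p k) 0)
    (hvar : HasSum (fun k : ℤ => (k : ℝ) ^ 2 * p k) (σ ^ 2))
    (N : ℤ) (hmax : ∀ k, p k ≤ p N) (hlast : ∀ k, p k = p N → k ≤ N)
    (hbmm₁ : 1 / (4 * σ) ≤ p N) (hbmm₂ : p N ≤ 1 / σ)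
    (hσ : σ ≥ max ((3 : ℝ) ^ (1 / ε)) ((12 * Real.exp 3) ^ (1 / (1 - 2 * ε)))) :
    ∃ N₀ : ℤ, N - 2 * ⌈σ ^ 2⌉ ≤ N₀ ∧ N₀ ≤ N ∧
      ∀ k : ℤ, k ≤ N₀ → p (k - 1) ≤ (1 - σ ^ (-(2 - ε))) * p k := by
  set δ : ℝ := σ ^ (-(2 - ε)) with hδdef
  -- basic facts about σ
  have h3σ : (3 : ℝ) ^ (1 / ε) ≤ σ := le_trans (le_max_left _ _) hσ
  have h12σ : (12 * Real.exp 3) ^ (1 / (1 - 2 * ε)) ≤ σ := le_trans (le_max_right _ _) hσ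
  have hσ0 : 0 < σ := lt_of_lt_of_le (Real.rpow_pos_of_pos (by norm_num) _) h3σ
  have hσε : (3 : ℝ) ≤ σ ^ ε := by
    have h := Real.rpow_le_rpow (by positivity) h3σ hε0.le
    rwa [← Real.rpow_mul (by norm_num), one_div_mul_cancel (ne_of_gt hε0),
      Real.rpow_one] at h
  have hσgt1 : 1 < σ := by
    by_contra h
    push_neg at h
    have := Real.rpow_le_one hσ0.le h hε0.le
    linarith
  have hσ1 : 1 ≤ σ := hσgt1.le
  have hσ12 : 12 * Real.exp 3 ≤ σ ^ (1 - 2 * ε) := by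
    have h := Real.rpow_le_rpow (by positivity) h12σ (by linarith : (0:ℝ) ≤ 1 - 2 * ε)
    rwa [← Real.rpow_mul (by positivity), one_div_mul_cancel (by linarith : (1:ℝ) - 2*ε ≠ 0),
      Real.rpow_one] at h
  have hexp1 : (1 : ℝ) ≤ Real.exp 3 := by nlinarith [Real.add_one_le_exp (3:ℝ)]
  have hσ1ε : (12 : ℝ) ≤ σ ^ ((1:ℝ) - ε) := by
    have h := Real.rpow_le_rpow_of_exponent_le hσ1 (show (1:ℝ) - 2*ε ≤ 1 - ε by linarith)
    linarith
  have hδ0 : 0 < δ := Real.rpow_pos_of_pos hσ0 _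
  have hδ1 : δ < 1 := Real.rpow_lt_one_of_one_lt_of_neg hσgt1 (by linarith)
  have hc0 : 0 ≤ 1 - δ := by linarith
  have e1 : σ ^ 2 * δ = σ ^ ε := by
    rw [hδdef, ← Real.rpow_natCast σ 2, ← Real.rpow_add hσ0]
    congr 1
    push_cast
    ring
  have e2a : σ * σ ^ ((1:ℝ) - ε) = σ ^ ((2:ℝ) - ε) := by
    have h := Real.rpow_add hσ0 1 (1 - ε)
    rw [Real.rpow_one] at h
    rw [← h]
    congr 1
    ring
  have e2 : δ * (σ * σ ^ ((1:ℝ) - ε)) = 1 := by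
    rw [e2a, hδdef, ← Real.rpow_add hσ0]
    rw [show -(2 - ε) + ((2:ℝ) - ε) = 0 by ring, Real.rpow_zero]
  have hpN : 0 < p N := lt_of_lt_of_le (by positivity) hbmm₁
  -- ceiling facts
  have hceil : σ ^ 2 ≤ (⌈σ ^ 2⌉ : ℝ) := Int.le_ceil _
  have hceil1 : (1 : ℤ) ≤ ⌈σ ^ 2⌉ := by
    have : (1:ℝ) ≤ (⌈σ ^ 2⌉ : ℝ) := by nlinarith
    exact_mod_cast this
  set Mn : ℕ := (2 * ⌈σ ^ 2⌉).toNat with hMndef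
  have hMnZ : (Mn : ℤ) = 2 * ⌈σ ^ 2⌉ := Int.toNat_of_nonneg (by omega)
  -- existence of a good point in the window
  have key : ∃ m : ℤ, N - 2 * ⌈σ ^ 2⌉ ≤ m ∧ m ≤ N ∧ p (m - 1) ≤ (1 - δ) * p m := by
    by_contra hcon
    push_neg at hcon
    -- iterated lower bound
    have hA : ∀ j : ℕ, (j : ℤ) ≤ 2 * ⌈σ ^ 2⌉ → (1 - δ) ^ j * p N ≤ p (N - j) := by
      intro j
      induction j with
      | zero => intro _; simp
      | succ j ih =>
          intro hj
          have hj' : (j : ℤ) ≤ 2 * ⌈σ ^ 2⌉ := by push_cast at hj ⊢; omega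
          have hwin := hcon (N - j) (by push_cast at hj ⊢; omega) (by omega)
          have hstep : (1 - δ) * ((1 - δ) ^ j * p N) ≤ (1 - δ) * p (N - j) :=
            mul_le_mul_of_nonneg_left (ih hj') hc0
          have hcast : (N - ((j:ℕ)+1 : ℕ) : ℤ) = N - (j:ℤ) - 1 := by push_cast; ring
          calc (1 - δ) ^ (j + 1) * p N = (1 - δ) * ((1 - δ) ^ j * p N) := by ring
            _ ≤ (1 - δ) * p (N - j) := hstep
            _ ≤ p (N - (j:ℤ) - 1) := (hwin).le
            _ = p (N - ((j:ℕ)+1 : ℕ)) := by rw [hcast]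
    set n : ℕ := Mn + 1 with hndef
    set S : ℝ := ∑ j ∈ Finset.range n, (1 - δ) ^ j with hSdef
    have hS0 : 0 ≤ S := Finset.sum_nonneg fun j _ => pow_nonneg hc0 j
    -- total mass bound
    have himg : ∑ j ∈ Finset.range n, p (N - (j : ℤ)) ≤ 1 := by
      have h := sum_le_hasSum ((Finset.range n).image (fun j : ℕ => N - (j : ℤ)))
        (fun i _ => hp i) hsum
      rwa [Finset.sum_image (fun x _ y _ h => by omega)] at h
    have hterm : ∀ j ∈ Finset.range n, (1 - δ) ^ j * p N ≤ p (N - (j : ℤ)) := by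
      intro j hj
      apply hA
      have := Finset.mem_range.mp hj
      omega
    have hSpN : S * p N ≤ 1 := by
      calc S * p N = ∑ j ∈ Finset.range n, (1 - δ) ^ j * p N := Finset.sum_mul _ _ _
        _ ≤ ∑ j ∈ Finset.range n, p (N - (j : ℤ)) := Finset.sum_le_sum hterm
        _ ≤ 1 := himg
    -- geometric sum identity
    have hgeom : S * δ = 1 - (1 - δ) ^ n := by
      have h := geom_sum_mul (1 - δ) n
      have h2 : S * ((1 - δ) - 1) = (1 - δ) ^ n - 1 := h
      nlinarith [h2]
    -- (1-δ)^n ≤ 1/7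
    have hn6 : (6 : ℝ) ≤ (n : ℝ) * δ := by
      have h1 : 2 * σ ^ 2 ≤ (n : ℝ) := by
        have hMnR : (Mn : ℝ) = 2 * (⌈σ ^ 2⌉ : ℝ) := by exact_mod_cast hMnZ
        have hnR : (n : ℝ) = (Mn : ℝ) + 1 := by push_cast [hndef]; ring
        linarith
      have h2 := mul_le_mul_of_nonneg_right h1 hδ0.le
      nlinarith [e1, hσε]
    have hbern : 1 + (n : ℝ) * δ ≤ (1 + δ) ^ n :=
      one_add_mul_le_pow (by linarith : (-2 : ℝ) ≤ δ) n
    have hprod : (1 - δ) ^ n * (1 + δ) ^ n ≤ 1 := by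
      rw [← mul_pow]
      have h1 : (1 - δ) * (1 + δ) = 1 - δ ^ 2 := by ring
      rw [h1]
      apply pow_le_one₀ (by nlinarith) (by nlinarith)
    have hcn : (1 - δ) ^ n ≤ 1 / 7 := by
      have h7 : (7 : ℝ) ≤ (1 + δ) ^ n := by linarith
      nlinarith [pow_nonneg hc0 n]
    -- combine
    have hSlb : 6 / 7 ≤ S * δ := by linarith
    have hδσ : 12 * σ * δ ≤ 1 := by
      have h := mul_le_mul_of_nonneg_left hσ1ε (mul_pos hδ0 hσ0).le
      nlinarith [e2]
    have hfin : 18 / 7 ≤ S * p N := by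
      have hpN' : 1 / (4 * σ) ≤ p N := hbmm₁
      have hI : 12 * σ ≤ 1 / δ := by rw [le_div_iff₀ hδ0]; linarith
      have hII : (6 / 7) / δ ≤ S := by rw [div_le_iff₀ hδ0]; linarith
      have hS12 : 72 / 7 * σ ≤ S := by
        calc 72 / 7 * σ = (6 / 7) * (12 * σ) := by ring
          _ ≤ (6 / 7) * (1 / δ) := by linarith [mul_le_mul_of_nonneg_left hI (by norm_num : (0:ℝ) ≤ 6/7)]
          _ = (6 / 7) / δ := by ring
          _ ≤ S := hII
      calc (18 : ℝ) / 7 = (72 / 7 * σ) * (1 / (4 * σ)) := by field_simp; ring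
        _ ≤ S * (1 / (4 * σ)) := mul_le_mul_of_nonneg_right hS12 (by positivity)
        _ ≤ S * p N := mul_le_mul_of_nonneg_left hpN' hS0
    linarith
  obtain ⟨m₀, hm1, hm2, hm3⟩ := key
  refine ⟨m₀, hm1, hm2, ?_⟩
  intro k hk
  by_cases hpk : 0 < p k
  · have hpm₀ : 0 < p m₀ := hsupp k N m₀ hk hm2 hpk hpN
    have hpos : ∀ j, k ≤ j → j ≤ m₀ → 0 < p j := fun j hj hj' => hsupp k m₀ j hj hj' hpk hpm₀
    have hcross := logconcave_cross p hp hlc k m₀ hk hpos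
    have h1 : p (m₀ - 1) * p k ≤ ((1 - δ) * p m₀) * p k :=
      mul_le_mul_of_nonneg_right hm3 (hp k)
    have h2 : p (k - 1) * p m₀ ≤ ((1 - δ) * p k) * p m₀ := by nlinarith
    exact le_of_mul_le_mul_right h2 hpm₀
  · have hk0 : p k = 0 := le_antisymm (not_lt.mp hpk) (hp k)
    have hk10 : p (k - 1) = 0 := by
      by_contra h
      have hpk1 : 0 < p (k - 1) := lt_of_le_of_ne (hp _) (Ne.symm h)
      exact hpk (hsupp (k - 1) N k (by omega) (le_trans hk hm2) hpk1 hpN)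
    rw [hk0, hk10, mul_zero]
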